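/- Dynamic programming principle for the regularized MDP (Proposition C.1 in kernel form): For every x ∈ 𝒳, V_h(x) = sup over all policies π of V^π(x), where V^π is the unique bounded measurable fixed point of T^π and V_h is the unique bounded measurable fixed point of T*; moreover this supremum is attained by the Gibbs policy π*_h(x,u) := exp( (r(x,u)h + γ ∫_𝒳 V_h(y) κ(x,u)(dy)) / (λh) ) / ∫_𝒰 exp( (r(x,u')h + γ ∫_𝒳 V_h(y) κ(x,u')(dy)) / (λh) ) μ(du'). -/

import Mathlib

open MeasureTheory

lemma DPP.integrable_of_bdd {α : Type*} [MeasurableSpace α] {μ : Measure α} [IsFiniteMeasure μ]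
    {f : α → ℝ} (hf : Measurable f) {C : ℝ} (hC : ∀ u, |f u| ≤ C) : Integrable f μ :=
  ⟨hf.aestronglyMeasurable, HasFiniteIntegral.of_bounded (C := C) (ae_of_all _ hC)⟩

lemma DPP.abs_mul_log_le {t C : ℝ} (h0 : 0 ≤ t) (h1 : t ≤ C) :
    |t * Real.log t| ≤ 1 + C * |Real.log C| := by
  rcases le_or_gt t 1 with ht | ht
  · rcases eq_or_lt_of_le h0 with rfl | h0'
    · simp; positivity
    · have hlog : Real.log t ≤ 0 := Real.log_nonpos h0 ht
      have h2 : -(t * Real.log t) ≤ 1 := by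
        have h := Real.log_le_sub_one_of_pos (x := t⁻¹) (by positivity)
        rw [Real.log_inv] at h
        have h2' : t * (-Real.log t) ≤ t * (t⁻¹ - 1) :=
          mul_le_mul_of_nonneg_left h h0
        rw [mul_sub, mul_inv_cancel₀ (ne_of_gt h0')] at h2'
        nlinarith
      have h3 : 0 ≤ -(t * Real.log t) := by nlinarith
      rw [abs_of_nonpos (by nlinarith)]
      have : 0 ≤ C * |Real.log C| := by
        have : 0 ≤ C := le_trans h0 h1
        positivity
      linarith
  · have hC1 : (1:ℝ) ≤ C := le_trans ht.le h1
    have hlogt : 0 ≤ Real.log t := Real.log_nonneg ht.le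
    have hlogC : Real.log t ≤ Real.log C := Real.log_le_log (by linarith) h1
    have hlogC0 : 0 ≤ Real.log C := le_trans hlogt hlogC
    rw [abs_of_nonneg (by positivity), abs_of_nonneg hlogC0]
    nlinarith

lemma DPP.integrable_mul_log {𝒰 : Type*} [MeasurableSpace 𝒰] (μ : Measure 𝒰) [IsFiniteMeasure μ]
    (c : ℝ) {a π : 𝒰 → ℝ} (ha : Measurable a) {Ca : ℝ} (haB : ∀ u, |a u| ≤ Ca)
    (hπm : Measurable π) (hπ0 : ∀ u, 0 ≤ π u) {Cπ : ℝ} (hπB : ∀ u, π u ≤ Cπ) :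
    Integrable (fun u => (a u - c * Real.log (π u)) * π u) μ := by
  have hCπ0 : ∀ u, π u ≤ max Cπ 0 := fun u => le_max_of_le_left (hπB u)
  apply DPP.integrable_of_bdd (((ha.sub (measurable_const.mul hπm.log)).mul hπm))
    (C := (Ca + |c|) * max Cπ 0 + |c| * (1 + max Cπ 0 * |Real.log (max Cπ 0)|))
  intro u
  have hCa : 0 ≤ Ca := le_trans (abs_nonneg _) (haB u)
  have h6 : |(a u - c * Real.log (π u)) * π u| ≤
      |a u * π u| + |c| * |Real.log (π u) * π u| := by
    rw [sub_mul]
    calc |a u * π u - c * Real.log (π u) * π u| ≤ |a u * π u| + |c * Real.log (π u) * π u| :=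
          abs_sub _ _
      _ = |a u * π u| + |c| * |Real.log (π u) * π u| := by
          rw [mul_assoc, abs_mul c]
  have h7 : |a u * π u| ≤ Ca * max Cπ 0 := by
    rw [abs_mul, abs_of_nonneg (hπ0 u)]
    exact mul_le_mul (haB u) (hCπ0 u) (hπ0 u) hCa
  have h8 : |Real.log (π u) * π u| ≤ 1 + max Cπ 0 * |Real.log (max Cπ 0)| := by
    rw [mul_comm]
    exact DPP.abs_mul_log_le (hπ0 u) (hCπ0 u)
  have h9 : |c| * |Real.log (π u) * π u| ≤ |c| * (1 + max Cπ 0 * |Real.log (max Cπ 0)|) :=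
    mul_le_mul_of_nonneg_left h8 (abs_nonneg _)
  show |(a u - c * Real.log (π u)) * π u| ≤ _
  nlinarith [abs_nonneg c, le_max_right Cπ 0, abs_nonneg (Real.log (max Cπ 0))]

/-- Gibbs variational inequality. -/
lemma DPP.gibbs {𝒰 : Type*} [MeasurableSpace 𝒰] (μ : Measure 𝒰) [IsFiniteMeasure μ]
    {c : ℝ} (hc : 0 < c) {a π : 𝒰 → ℝ} (ha : Measurable a) {Ca : ℝ} (haB : ∀ u, |a u| ≤ Ca)
    (hπm : Measurable π) (hπ0 : ∀ u, 0 ≤ π u) {Cπ : ℝ} (hπB : ∀ u, π u ≤ Cπ)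
    (hπ1 : ∫ u, π u ∂μ = 1) :
    ∫ u, (a u - c * Real.log (π u)) * π u ∂μ ≤ c * Real.log (∫ u, Real.exp (a u / c) ∂μ) := by
  set f : 𝒰 → ℝ := fun u => Real.exp (a u / c) with hf
  set F : ℝ := ∫ u, f u ∂μ with hF
  have hCπ0 : ∀ u, π u ≤ max Cπ 0 := fun u => le_max_of_le_left (hπB u)
  have hfm : Measurable f := (ha.div_const c).exp
  have hflb : ∀ u, Real.exp (-Ca / c) ≤ f u := fun u => Real.exp_le_exp.2 <| by
    have := (abs_le.1 (haB u)).1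
    apply div_le_div_of_nonneg_right ?_ hc.le
    linarith
  have hfub : ∀ u, f u ≤ Real.exp (Ca / c) := fun u => Real.exp_le_exp.2 <| by
    have := (abs_le.1 (haB u)).2
    apply div_le_div_of_nonneg_right ?_ hc.le
    linarith
  have hfint : Integrable f μ := DPP.integrable_of_bdd hfm (C := Real.exp (Ca / c))
    (fun u => by rw [abs_of_nonneg (Real.exp_pos _).le]; exact hfub u)
  have hπint : Integrable π μ := DPP.integrable_of_bdd hπm (C := max Cπ 0)
    (fun u => by rw [abs_of_nonneg (hπ0 u)]; exact hCπ0 u)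
  have hμ : μ Set.univ ≠ 0 := by
    intro h0
    rw [Measure.measure_univ_eq_zero] at h0
    rw [h0, integral_zero_measure] at hπ1
    exact one_ne_zero hπ1.symm
  have hμr : 0 < (μ Set.univ).toReal := ENNReal.toReal_pos hμ (measure_ne_top μ _)
  have hFpos : 0 < F := by
    have h1 : Real.exp (-Ca / c) * (μ Set.univ).toReal ≤ F := by
      rw [hF]
      calc Real.exp (-Ca / c) * (μ Set.univ).toReal
          = ∫ _, Real.exp (-Ca / c) ∂μ := by rw [integral_const, smul_eq_mul, Measure.real_def]; ring
        _ ≤ ∫ u, f u ∂μ := integral_mono (integrable_const _) hfint hflb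
    have : 0 < Real.exp (-Ca / c) * (μ Set.univ).toReal := by positivity
    linarith
  have key : ∀ u, (a u - c * Real.log (π u)) * π u ≤
      c * (f u / F) - c * π u + c * Real.log F * π u := by
    intro u
    rcases eq_or_lt_of_le (hπ0 u) with h0 | h0
    · rw [← h0]
      have : 0 < c * (f u / F) := by positivity
      simp only [mul_zero, zero_mul]
      linarith
    · have hfu : 0 < f u := Real.exp_pos _
      have h1 : Real.log (f u / (π u * F)) ≤ f u / (π u * F) - 1 :=
        Real.log_le_sub_one_of_pos (by positivity)
      have h2 : Real.log (f u / (π u * F)) = a u / c - Real.log (π u) - Real.log F := by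
        rw [Real.log_div (ne_of_gt hfu) (by positivity), Real.log_mul (ne_of_gt h0) (ne_of_gt hFpos),
          hf, Real.log_exp]
        ring
      rw [h2] at h1
      have h3 : (a u / c - Real.log (π u) - Real.log F) * π u ≤ (f u / (π u * F) - 1) * π u :=
        mul_le_mul_of_nonneg_right h1 (hπ0 u)
      have h4 : (f u / (π u * F) - 1) * π u = f u / F - π u := by
        field_simp
      rw [h4] at h3
      have h5 : (a u - c * Real.log (π u)) * π u =
          c * ((a u / c - Real.log (π u) - Real.log F) * π u) + c * Real.log F * π u := by
        field_simp; ring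
      rw [h5]
      nlinarith
  have hLint : Integrable (fun u => (a u - c * Real.log (π u)) * π u) μ :=
    DPP.integrable_mul_log μ c ha haB hπm hπ0 hπB
  have hRint : Integrable (fun u => c * (f u / F) - c * π u + c * Real.log F * π u) μ :=
    (((hfint.div_const F).const_mul c).sub (hπint.const_mul c)).add (hπint.const_mul _)
  have hmono := integral_mono hLint hRint key
  have hR : ∫ u, (c * (f u / F) - c * π u + c * Real.log F * π u) ∂μ = c * Real.log F := by
    have e0 : (fun u => c * (f u / F) - c * π u + c * Real.log F * π u)
        = fun u => c / F * f u + (c * Real.log F - c) * π u := by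
      funext u; field_simp; ring
    rw [e0, integral_add (hfint.const_mul _) (hπint.const_mul _), integral_const_mul,
      integral_const_mul, hπ1, ← hF]
    field_simp
    ring
  rw [hR] at hmono
  exact hmono

/-- A (randomized feedback) policy: a bounded measurable nonnegative function
`π : 𝒳 × 𝒰 → ℝ` with `∫ π(x,·) dμ = 1` for every `x`. -/
def IsPolicy {𝒳 𝒰 : Type*} [MeasurableSpace 𝒳] [MeasurableSpace 𝒰]
    (μ : Measure 𝒰) (π : 𝒳 × 𝒰 → ℝ) : Prop :=
  Measurable π ∧ (∃ C : ℝ, ∀ p, π p ≤ C) ∧ (∀ p, 0 ≤ π p) ∧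
    ∀ x, ∫ u, π (x, u) ∂μ = 1

/-- The policy Bellman operator
`(T^π W)(x) = ∫ [r(x,u)h − λh·ln π(x,u) + γ ∫ W dκ(x,u)] π(x,u) μ(du)`
(with the convention `0·ln 0 = 0`, automatic since `Real.log 0 = 0`). -/
noncomputable def Tpol {𝒳 𝒰 : Type*} [MeasurableSpace 𝒳] [MeasurableSpace 𝒰]
    (μ : Measure 𝒰) (κ : ProbabilityTheory.Kernel (𝒳 × 𝒰) 𝒳) (r : 𝒳 × 𝒰 → ℝ)
    (h lam γ : ℝ) (π : 𝒳 × 𝒰 → ℝ) (W : 𝒳 → ℝ) : 𝒳 → ℝ :=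
  fun x => ∫ u,
    (r (x, u) * h - lam * h * Real.log (π (x, u)) + γ * ∫ y, W y ∂(κ (x, u)))
      * π (x, u) ∂μ

/-- The discrete-time entropy-regularized Bellman operator
`(T*W)(x) = λh · ln ∫ exp((r(x,u)h + γ ∫ W dκ(x,u)) / (λh)) μ(du)`. -/
noncomputable def Tstar {𝒳 𝒰 : Type*} [MeasurableSpace 𝒳] [MeasurableSpace 𝒰]
    (μ : Measure 𝒰) (κ : ProbabilityTheory.Kernel (𝒳 × 𝒰) 𝒳) (r : 𝒳 × 𝒰 → ℝ)
    (h lam γ : ℝ) (W : 𝒳 → ℝ) : 𝒳 → ℝ :=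
  fun x => lam * h *
    Real.log (∫ u, Real.exp ((r (x, u) * h + γ * ∫ y, W y ∂(κ (x, u))) / (lam * h)) ∂μ)

/-- **Dynamic programming principle for the regularized MDP** (Proposition C.1 in
kernel form): for every `x`, `V_h(x)` is the greatest value `V^π(x)` over all
policies `π` (where `V^π` is the unique bounded measurable fixed point of `T^π`),
and the supremum is attained by the Gibbs policy `π*_h`. -/
theorem dynamic_programming_principle
    {𝒳 𝒰 : Type*} [MeasurableSpace 𝒳] [MeasurableSpace 𝒰]
    (μ : Measure 𝒰) [IsFiniteMeasure μ] (hμpos : 0 < μ Set.univ)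
    (κ : ProbabilityTheory.Kernel (𝒳 × 𝒰) 𝒳) [ProbabilityTheory.IsMarkovKernel κ]
    (r : 𝒳 × 𝒰 → ℝ) (hrmeas : Measurable r) (hrbdd : ∃ C : ℝ, ∀ p, |r p| ≤ C)
    (h lam γ : ℝ) (hh : 0 < h) (hlam : 0 < lam) (hγ : γ ∈ Set.Ioo (0 : ℝ) 1)
    (Vh : 𝒳 → ℝ) (hVhmeas : Measurable Vh) (hVhbdd : ∃ C : ℝ, ∀ x, |Vh x| ≤ C)
    (hVhfix : Tstar μ κ r h lam γ Vh = Vh)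
    (πstar : 𝒳 × 𝒰 → ℝ)
    (hπstar : πstar = fun p =>
      Real.exp ((r p * h + γ * ∫ y, Vh y ∂(κ p)) / (lam * h)) /
        ∫ u', Real.exp ((r (p.1, u') * h + γ * ∫ y, Vh y ∂(κ (p.1, u'))) / (lam * h)) ∂μ) :
    IsPolicy μ πstar ∧
    Tpol μ κ r h lam γ πstar Vh = Vh ∧
    ∀ x : 𝒳, IsGreatest
      {v : ℝ | ∃ (π : 𝒳 × 𝒰 → ℝ) (Vπ : 𝒳 → ℝ), IsPolicy μ π ∧ Measurable Vπ ∧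
        (∃ C : ℝ, ∀ y, |Vπ y| ≤ C) ∧ Tpol μ κ r h lam γ π Vπ = Vπ ∧ v = Vπ x}
      (Vh x) := by
  obtain ⟨Cr, hCr⟩ := hrbdd
  obtain ⟨CV, hCV⟩ := hVhbdd
  have hc : 0 < lam * h := by positivity
  set Cr' := max Cr 0 with hCr'
  set CV' := max CV 0 with hCV'
  have hCr2 : ∀ p, |r p| ≤ Cr' := fun p => le_max_of_le_left (hCr p)
  have hCV2 : ∀ y, |Vh y| ≤ CV' := fun y => le_max_of_le_left (hCV y)
  have hCr0 : 0 ≤ Cr' := le_max_right _ _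
  have hCV0 : 0 ≤ CV' := le_max_right _ _
  -- kernel integral of a bounded measurable function
  have kim : ∀ (W : 𝒳 → ℝ), Measurable W → Measurable (fun p : 𝒳 × 𝒰 => ∫ y, W y ∂(κ p)) := by
    intro W hW
    exact ((hW.comp measurable_snd).stronglyMeasurable.integral_kernel_prod_right'
      (κ := κ)).measurable
  have kib : ∀ (W : 𝒳 → ℝ) (C : ℝ), (∀ y, |W y| ≤ C) → ∀ p : 𝒳 × 𝒰, |∫ y, W y ∂(κ p)| ≤ C := by
    intro W C hWb p
    calc |∫ y, W y ∂(κ p)| ≤ C * ((κ p) Set.univ).toReal := by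
          rw [← Real.norm_eq_abs]
          exact norm_integral_le_of_norm_le_const
            (ae_of_all _ fun y => by rw [Real.norm_eq_abs]; exact hWb y)
      _ = C := by simp
  have hIm : Measurable (fun p : 𝒳 × 𝒰 => ∫ y, Vh y ∂(κ p)) := kim Vh hVhmeas
  have hIb : ∀ p, |∫ y, Vh y ∂(κ p)| ≤ CV' := kib Vh CV' hCV2
  set G : 𝒳 × 𝒰 → ℝ := fun p => (r p * h + γ * ∫ y, Vh y ∂(κ p)) / (lam * h) with hG
  have hGm : Measurable G := ((hrmeas.mul_const h).add (measurable_const.mul hIm)).div_const _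
  set Bg : ℝ := (Cr' * h + CV') / (lam * h) with hBg
  have hGb : ∀ p, |G p| ≤ Bg := by
    intro p
    rw [hG, hBg]
    simp only
    rw [abs_div, abs_of_pos hc]
    apply div_le_div_of_nonneg_right ?_ hc.le
    calc |r p * h + γ * ∫ y, Vh y ∂(κ p)| ≤ |r p * h| + |γ * ∫ y, Vh y ∂(κ p)| := abs_add_le _ _
      _ ≤ Cr' * h + CV' := by
          rw [abs_mul, abs_mul, abs_of_pos hh, abs_of_pos hγ.1]
          have h1 : |r p| * h ≤ Cr' * h := mul_le_mul_of_nonneg_right (hCr2 p) hh.le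
          have h2 : γ * |∫ y, Vh y ∂(κ p)| ≤ 1 * CV' :=
            mul_le_mul hγ.2.le (hIb p) (abs_nonneg _) zero_le_one
          linarith
  have hEm : Measurable (fun p : 𝒳 × 𝒰 => Real.exp (G p)) := hGm.exp
  have hElb : ∀ p, Real.exp (-Bg) ≤ Real.exp (G p) :=
    fun p => Real.exp_le_exp.2 (neg_le_of_abs_le (hGb p))
  have hEub : ∀ p, Real.exp (G p) ≤ Real.exp Bg :=
    fun p => Real.exp_le_exp.2 (le_of_abs_le (hGb p))
  set Z : 𝒳 → ℝ := fun x => ∫ u, Real.exp (G (x, u)) ∂μ with hZ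
  have hZm : Measurable Z := hEm.stronglyMeasurable.integral_prod_right'.measurable
  have hm : 0 < (μ Set.univ).toReal := ENNReal.toReal_pos (ne_of_gt hμpos) (measure_ne_top μ _)
  have hEint : ∀ x, Integrable (fun u => Real.exp (G (x, u))) μ := by
    intro x
    exact DPP.integrable_of_bdd (hEm.comp measurable_prodMk_left) (C := Real.exp Bg)
      (fun u => by rw [abs_of_nonneg (Real.exp_pos _).le]; exact hEub (x, u))
  have hZlb : ∀ x, Real.exp (-Bg) * (μ Set.univ).toReal ≤ Z x := by
    intro x
    rw [hZ]
    calc Real.exp (-Bg) * (μ Set.univ).toReal = ∫ _, Real.exp (-Bg) ∂μ := by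
          rw [integral_const, smul_eq_mul, Measure.real_def]; ring
      _ ≤ ∫ u, Real.exp (G (x, u)) ∂μ :=
          integral_mono (integrable_const _) (hEint x) (fun u => hElb (x, u))
  have hZpos : ∀ x, 0 < Z x := by
    intro x
    have : 0 < Real.exp (-Bg) * (μ Set.univ).toReal := by positivity
    linarith [hZlb x]
  -- πstar in terms of G and Z
  have hπs : πstar = fun p => Real.exp (G p) / Z p.1 := by
    rw [hπstar]
  -- IsPolicy
  have hπm : Measurable πstar := by
    rw [hπs]; exact hEm.div (hZm.comp measurable_fst)
  have hπ0 : ∀ p, 0 ≤ πstar p := by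
    intro p; rw [hπs]
    exact div_nonneg (Real.exp_pos _).le (hZpos p.1).le
  have hπB : ∀ p, πstar p ≤ Real.exp Bg / (Real.exp (-Bg) * (μ Set.univ).toReal) := by
    intro p; rw [hπs]
    simp only
    apply div_le_div₀ (Real.exp_pos _).le (hEub p) (by positivity) (hZlb p.1)
  have hπ1 : ∀ x, ∫ u, πstar (x, u) ∂μ = 1 := by
    intro x
    rw [hπs]
    simp only
    rw [integral_div]
    exact div_self (ne_of_gt (hZpos x))
  have hpolstar : IsPolicy μ πstar := ⟨hπm, ⟨_, hπB⟩, hπ0, hπ1⟩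
  -- Vh x = lam * h * log (Z x)
  have hTs : ∀ x, Vh x = lam * h * Real.log (Z x) := by
    intro x
    conv_lhs => rw [← hVhfix]
    simp only [Tstar, hZ, hG]
  -- Fixed point of Tpol πstar
  have hfixstar : Tpol μ κ r h lam γ πstar Vh = Vh := by
    funext x
    simp only [Tpol]
    have hlogπ : ∀ u : 𝒰, Real.log (πstar (x, u)) = G (x, u) - Real.log (Z x) := by
      intro u
      rw [hπs]
      simp only
      rw [Real.log_div (Real.exp_ne_zero _) (ne_of_gt (hZpos x)), Real.log_exp]
    have hint : ∀ u : 𝒰,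
        (r (x, u) * h - lam * h * Real.log (πstar (x, u)) + γ * ∫ y, Vh y ∂(κ (x, u)))
          * πstar (x, u) = (lam * h * Real.log (Z x)) * πstar (x, u) := by
      intro u
      rw [hlogπ u]
      have hGe : r (x, u) * h + γ * ∫ y, Vh y ∂(κ (x, u)) = lam * h * G (x, u) := by
        rw [hG]; field_simp
      linear_combination πstar (x, u) * hGe
    rw [integral_congr_ae (ae_of_all _ hint), integral_const_mul, hπ1 x, mul_one]
    exact (hTs x).symm
  refine ⟨hpolstar, hfixstar, fun x => ⟨⟨πstar, Vh, hpolstar, hVhmeas, ⟨CV, hCV⟩, hfixstar, rfl⟩, ?_⟩⟩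
  -- upper bound
  rintro v ⟨π, Vπ, ⟨hπm', ⟨Cπ, hπB'⟩, hπ0', hπ1'⟩, hVπm, ⟨CVπ, hCVπ⟩, hπfix, rfl⟩
  set CVπ' := max CVπ 0 with hCVπ'
  have hCVπ2 : ∀ y, |Vπ y| ≤ CVπ' := fun y => le_max_of_le_left (hCVπ y)
  have hIπm : Measurable (fun p : 𝒳 × 𝒰 => ∫ y, Vπ y ∂(κ p)) := kim Vπ hVπm
  have hIπb : ∀ p, |∫ y, Vπ y ∂(κ p)| ≤ CVπ' := kib Vπ CVπ' hCVπ2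
  set S : Set ℝ := Set.range (fun z => Vπ z - Vh z) with hS
  have hne : S.Nonempty := ⟨Vπ x - Vh x, ⟨x, rfl⟩⟩
  have hbdd : BddAbove S := by
    refine ⟨CVπ' + CV', ?_⟩
    rintro _ ⟨z, rfl⟩
    have h1 := (abs_le.1 (hCVπ2 z)).2
    have h2 := (abs_le.1 (hCV2 z)).1
    simp only
    linarith
  set D : ℝ := sSup S with hD
  have hD1 : ∀ z, Vπ z - Vh z ≤ D := fun z => le_csSup hbdd ⟨z, rfl⟩
  have main : ∀ z, Vπ z - Vh z ≤ γ * D := by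
    intro z
    -- pieces
    have harm : Measurable (fun u => r (z, u)) := hrmeas.comp measurable_prodMk_left
    have ha1m : Measurable (fun u : 𝒰 => r (z, u) * h + γ * ∫ y, Vπ y ∂(κ (z, u))) :=
      (harm.mul_const h).add (measurable_const.mul (hIπm.comp measurable_prodMk_left))
    have ha2m : Measurable (fun u : 𝒰 => r (z, u) * h + γ * ∫ y, Vh y ∂(κ (z, u))) :=
      (harm.mul_const h).add (measurable_const.mul (hIm.comp measurable_prodMk_left))
    have ha1b : ∀ u : 𝒰, |r (z, u) * h + γ * ∫ y, Vπ y ∂(κ (z, u))| ≤ Cr' * h + CVπ' := by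
      intro u
      calc |r (z, u) * h + γ * ∫ y, Vπ y ∂(κ (z, u))|
          ≤ |r (z, u) * h| + |γ * ∫ y, Vπ y ∂(κ (z, u))| := abs_add_le _ _
        _ ≤ Cr' * h + CVπ' := by
            rw [abs_mul, abs_mul, abs_of_pos hh, abs_of_pos hγ.1]
            have h1 : |r (z, u)| * h ≤ Cr' * h := mul_le_mul_of_nonneg_right (hCr2 _) hh.le
            have h2 : γ * |∫ y, Vπ y ∂(κ (z, u))| ≤ 1 * CVπ' :=
              mul_le_mul hγ.2.le (hIπb _) (abs_nonneg _) zero_le_one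
            linarith
    have ha2b : ∀ u : 𝒰, |r (z, u) * h + γ * ∫ y, Vh y ∂(κ (z, u))| ≤ Cr' * h + CV' := by
      intro u
      calc |r (z, u) * h + γ * ∫ y, Vh y ∂(κ (z, u))|
          ≤ |r (z, u) * h| + |γ * ∫ y, Vh y ∂(κ (z, u))| := abs_add_le _ _
        _ ≤ Cr' * h + CV' := by
            rw [abs_mul, abs_mul, abs_of_pos hh, abs_of_pos hγ.1]
            have h1 : |r (z, u)| * h ≤ Cr' * h := mul_le_mul_of_nonneg_right (hCr2 _) hh.le
            have h2 : γ * |∫ y, Vh y ∂(κ (z, u))| ≤ 1 * CV' :=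
              mul_le_mul hγ.2.le (hIb _) (abs_nonneg _) zero_le_one
            linarith
    have hπzm : Measurable (fun u => π (z, u)) := hπm'.comp measurable_prodMk_left
    have hπz0 : ∀ u, 0 ≤ π (z, u) := fun u => hπ0' (z, u)
    have hπzB : ∀ u, π (z, u) ≤ Cπ := fun u => hπB' (z, u)
    have hπzint : Integrable (fun u => π (z, u)) μ :=
      DPP.integrable_of_bdd hπzm (C := max Cπ 0)
        (fun u => by rw [abs_of_nonneg (hπz0 u)]; exact le_max_of_le_left (hπzB u))
    -- step 1 : Vπ z in integral form
    have h1 : Vπ z = ∫ u,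
        ((r (z, u) * h + γ * ∫ y, Vπ y ∂(κ (z, u))) - lam * h * Real.log (π (z, u)))
          * π (z, u) ∂μ := by
      conv_lhs => rw [← hπfix]
      simp only [Tpol]
      exact integral_congr_ae (ae_of_all _ fun u => by ring)
    -- integrability of the two integrands
    have hint1 : Integrable (fun u =>
        ((r (z, u) * h + γ * ∫ y, Vπ y ∂(κ (z, u))) - lam * h * Real.log (π (z, u)))
          * π (z, u)) μ :=
      DPP.integrable_mul_log μ (lam * h) ha1m ha1b hπzm hπz0 hπzB
    have hint2 : Integrable (fun u =>
        ((r (z, u) * h + γ * ∫ y, Vh y ∂(κ (z, u))) - lam * h * Real.log (π (z, u)))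
          * π (z, u)) μ :=
      DPP.integrable_mul_log μ (lam * h) ha2m ha2b hπzm hπz0 hπzB
    -- step 2 : compare a1 and a2
    have hcmp : ∀ u : 𝒰,
        ((r (z, u) * h + γ * ∫ y, Vπ y ∂(κ (z, u))) - lam * h * Real.log (π (z, u)))
          * π (z, u) ≤
        ((r (z, u) * h + γ * ∫ y, Vh y ∂(κ (z, u))) - lam * h * Real.log (π (z, u)))
          * π (z, u) + γ * D * π (z, u) := by
      intro u
      have hκint1 : Integrable Vπ (κ (z, u)) := DPP.integrable_of_bdd hVπm hCVπ2
      have hκint2 : Integrable Vh (κ (z, u)) := DPP.integrable_of_bdd hVhmeas hCV2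
      have hdiff : (∫ y, Vπ y ∂(κ (z, u))) - ∫ y, Vh y ∂(κ (z, u)) ≤ D := by
        rw [← integral_sub hκint1 hκint2]
        calc ∫ y, (Vπ y - Vh y) ∂(κ (z, u)) ≤ ∫ _, D ∂(κ (z, u)) :=
              integral_mono (hκint1.sub hκint2) (integrable_const _) (fun y => hD1 y)
          _ = D := by simp
      have h3 : γ * ((∫ y, Vπ y ∂(κ (z, u))) - ∫ y, Vh y ∂(κ (z, u))) ≤ γ * D :=
        mul_le_mul_of_nonneg_left hdiff hγ.1.le
      nlinarith [hπz0 u]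
    have hint3 : Integrable (fun u =>
        ((r (z, u) * h + γ * ∫ y, Vh y ∂(κ (z, u))) - lam * h * Real.log (π (z, u)))
          * π (z, u) + γ * D * π (z, u)) μ := hint2.add (hπzint.const_mul (γ * D))
    have h4 := integral_mono hint1 hint3 hcmp
    rw [integral_add hint2 (hπzint.const_mul (γ * D)), integral_const_mul, hπ1' z, mul_one] at h4
    -- step 3 : gibbs
    have h5 : ∫ u,
        ((r (z, u) * h + γ * ∫ y, Vh y ∂(κ (z, u))) - lam * h * Real.log (π (z, u)))
          * π (z, u) ∂μ ≤ Vh z := by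
      have := DPP.gibbs μ hc ha2m ha2b hπzm hπz0 hπzB (hπ1' z)
      calc _ ≤ lam * h * Real.log (∫ u,
            Real.exp ((r (z, u) * h + γ * ∫ y, Vh y ∂(κ (z, u))) / (lam * h)) ∂μ) := this
        _ = Vh z := by
            conv_rhs => rw [← hVhfix]
            simp only [Tstar]
    rw [h1]
    linarith [h4, h5]
  have hD2 : D ≤ γ * D := csSup_le hne (by rintro _ ⟨z, rfl⟩; exact main z)
  have hD0 : D ≤ 0 := by nlinarith [hγ.1, hγ.2]
  have := main x
  nlinarith [hγ.1]
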